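/- Let X be a topological space, T > 0, and let (E_t)_{t∈[0,T)} be a family of open subsets of X such that closure(E_{t₁}) ⊆ E_{t₂} whenever 0 ≤ t₁ < t₂ < T. Fix t₀ ∈ [0,T), and suppose S ⊆ X satisfies ⋂_{t∈(t₀,T)} E_t ⊆ S and S ∖ E₀ ⊆ ⋃_{t∈[0,T)} ∂E_t (where ∂E_t denotes the topological boundary of E_t). Then ⋂_{t∈(t₀,T)} E_t = closure(E_{t₀}). -/
import Mathlib


open Set Filter

/-- The first step in the proof of Theorem 9.2: for a nested family of open sets
`(E_t)_{t ∈ [0,T)}` with `closure (E t₁) ⊆ E t₂` for `t₁ < t₂`, if a set `S` contains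
`⋂_{t ∈ (t₀,T)} E t` and `S \ E 0` is covered by the boundaries `∂E_t`, then
`⋂_{t ∈ (t₀,T)} E t = closure (E t₀)`. -/
theorem nested_family_intersection_eq_closure
    {X : Type*} [TopologicalSpace X] (T : ℝ) (hT : 0 < T)
    (E : ℝ → Set X)
    (hopen : ∀ t ∈ Ico (0:ℝ) T, IsOpen (E t))
    (hnest : ∀ t₁ t₂ : ℝ, 0 ≤ t₁ → t₁ < t₂ → t₂ < T → closure (E t₁) ⊆ E t₂)
    (t₀ : ℝ) (ht₀ : t₀ ∈ Ico (0:ℝ) T)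
    (S : Set X)
    (h1 : (⋂ t ∈ Ioo t₀ T, E t) ⊆ S)
    (h2 : S \ E 0 ⊆ ⋃ t ∈ Ico (0:ℝ) T, frontier (E t)) :
    (⋂ t ∈ Ioo t₀ T, E t) = closure (E t₀) := by
  obtain ⟨ht₀0, ht₀T⟩ := ht₀
  apply Subset.antisymm
  · intro x hx
    by_contra hxc
    have hxS : x ∈ S := h1 hx
    have hxE0 : x ∉ E 0 := by
      intro hx0
      rcases eq_or_lt_of_le ht₀0 with h | h
      · exact hxc (subset_closure (h ▸ hx0))
      · exact hxc (subset_closure (hnest 0 t₀ le_rfl h ht₀T (subset_closure hx0)))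
    obtain ⟨t, ⟨ht0, htT⟩, hxf⟩ := by
      simpa using h2 ⟨hxS, hxE0⟩
    have hxcl : x ∈ closure (E t) := hxf.1
    have hxnot : x ∉ E t := by
      intro hxt
      exact hxf.2 (by rwa [IsOpen.interior_eq (hopen t ⟨ht0, htT⟩)])
    rcases le_or_gt t t₀ with h | h
    · rcases eq_or_lt_of_le h with h | h
      · exact hxc (h ▸ hxcl)
      · exact hxc (subset_closure (hnest t t₀ ht0 h ht₀T hxcl))
    · have hs : (t₀ + t) / 2 ∈ Ioo t₀ T :=
        ⟨by linarith, by linarith⟩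
      have hxE : x ∈ E ((t₀ + t) / 2) := by
        simp only [mem_iInter] at hx
        exact hx _ hs
      exact hxnot (hnest _ t (by linarith) (by linarith) htT (subset_closure hxE))
  · intro x hx
    simp only [mem_iInter]
    intro t ⟨ht1, ht2⟩
    exact hnest t₀ t ht₀0 ht1 ht2 hx
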